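/- If f̃ ∈ K[x₁,…,x_n] is nonzero and b ∈ ℚⁿ, then the initial form f̃_b ∈ ℂ[x₁,…,x_n] is nonzero; moreover, if a variable x_j does not occur in f̃_b, then for any γ_j ∈ ℂ*, the polynomial g̃(x₁,…,x̂_j,…,x_n) = f̃ evaluated at x_j = γ_j t^{b_j} has initial form at b with the j-th coordinate removed equal to f̃_b (with x_j formally removed), and g̃ is nonzero. -/

import Mathlib

noncomputable section

/-- The field of (generalized) Puiseux series over `ℂ`, modeled as Hahn series
with value group `ℚ` and coefficients in `ℂ`. -/
abbrev K : Type := HahnSeries ℚ ℂ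

/-- The principal coefficient of a Puiseux series. -/
def pc (a : K) : ℂ := a.coeff a.order

/-- The weight of the multi-index `i` of `f` at the point `b`:
`o(a_i) + i·b`. -/
def wt {n : ℕ} (f : MvPolynomial (Fin n) K) (b : Fin n → ℚ) (i : Fin n →₀ ℕ) : ℚ :=
  (f.coeff i).order + ∑ j, (i j : ℚ) * b j

/-- The tropicalization `f(b) = min_{i ∈ supp f} (o(a_i) + i·b)`, with value `⊤`
for the zero polynomial. -/
def trop {n : ℕ} (f : MvPolynomial (Fin n) K) (b : Fin n → ℚ) : WithTop ℚ :=
  f.support.inf fun i => (wt f b i : WithTop ℚ)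

/-- The tropical hypersurface `𝒯(f)`: points where the minimum is attained at
least twice. -/
def tropSet {n : ℕ} (f : MvPolynomial (Fin n) K) : Set (Fin n → ℚ) :=
  {b | ∃ i ∈ f.support, ∃ j ∈ f.support, i ≠ j ∧
    (wt f b i : WithTop ℚ) = trop f b ∧ (wt f b j : WithTop ℚ) = trop f b}

/-- The initial form `f̃_b ∈ ℂ[x]` of `f` at `b`. -/
def initForm {n : ℕ} (f : MvPolynomial (Fin n) K) (b : Fin n → ℚ) :
    MvPolynomial (Fin n) ℂ :=
  ∑ i ∈ f.support.filter fun i => (wt f b i : WithTop ℚ) = trop f b,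
    MvPolynomial.monomial i (pc (f.coeff i))

/-- Substitution of a constant `c ∈ K` for the first variable. -/
def substFirst {n : ℕ} (f : MvPolynomial (Fin (n + 1)) K) (c : K) :
    MvPolynomial (Fin n) K :=
  Polynomial.eval (MvPolynomial.C c) (MvPolynomial.finSuccEquiv K n f)

/-- Removing the (absent) first variable from a complex polynomial, by
substituting `1` for it. -/
def removeFirst {n : ℕ} (p : MvPolynomial (Fin (n + 1)) ℂ) :
    MvPolynomial (Fin n) ℂ :=
  Polynomial.eval (MvPolynomial.C 1) (MvPolynomial.finSuccEquiv ℂ n p)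

/- ### Auxiliary lemmas -/

lemma Kcoeff_sum {ι : Type*} (s : Finset ι) (u : ι → K) (q : ℚ) :
    (∑ k ∈ s, u k).coeff q = ∑ k ∈ s, (u k).coeff q :=
  map_sum (HahnSeries.coeff.addMonoidHom q) u s

lemma lt_order_of (x : K) (hx : x ≠ 0) (q₀ : ℚ) (h : ∀ q ≤ q₀, x.coeff q = 0) :
    q₀ < x.order := by
  by_contra hc
  push_neg at hc
  exact (mt HahnSeries.coeff_order_eq_zero.1 hx) (h _ hc)

lemma le_order_of (x : K) (hx : x ≠ 0) (q₀ : ℚ) (h : ∀ q < q₀, x.coeff q = 0) :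
    q₀ ≤ x.order := by
  by_contra hc
  push_neg at hc
  exact (mt HahnSeries.coeff_order_eq_zero.1 hx) (h _ hc)

lemma sum_order_pc {ι : Type*} (s : Finset ι) (u : ι → K) (k₀ : ι) (hk₀ : k₀ ∈ s)
    (q : ℚ) (hne : u k₀ ≠ 0) (hord : (u k₀).order = q)
    (hother : ∀ k ∈ s, k ≠ k₀ → ∀ p ≤ q, (u k).coeff p = 0) :
    (∑ k ∈ s, u k) ≠ 0 ∧ (∑ k ∈ s, u k).order = q ∧
      pc (∑ k ∈ s, u k) = pc (u k₀) := by
  have hq : (∑ k ∈ s, u k).coeff q = (u k₀).coeff q := by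
    rw [Kcoeff_sum]
    exact Finset.sum_eq_single k₀ (fun k hk hkk => hother k hk hkk q le_rfl)
      (fun h => absurd hk₀ h)
  have hq0 : (u k₀).coeff q ≠ 0 := hord ▸ (mt HahnSeries.coeff_order_eq_zero.1 hne)
  have hne' : (∑ k ∈ s, u k) ≠ 0 := by
    intro h
    rw [h, HahnSeries.coeff_zero] at hq
    exact hq0 hq.symm
  have hlow : ∀ p < q, (∑ k ∈ s, u k).coeff p = 0 := by
    intro p hp
    rw [Kcoeff_sum]
    refine Finset.sum_eq_zero fun k hk => ?_
    by_cases hkk : k = k₀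
    · subst hkk
      exact HahnSeries.coeff_eq_zero_of_lt_order (hord ▸ hp)
    · exact hother k hk hkk p hp.le
  have horder : (∑ k ∈ s, u k).order = q :=
    le_antisymm (HahnSeries.order_le_of_coeff_ne_zero (hq ▸ hq0))
      (le_order_of _ hne' _ hlow)
  exact ⟨hne', horder, by rw [pc, horder, hq, pc, hord]⟩

lemma eval_C_finSuccEquiv_coeff {R : Type*} [CommRing R] {n : ℕ}
    (f : MvPolynomial (Fin (n+1)) R) (c : R) (m : Fin n →₀ ℕ) :
    (Polynomial.eval (MvPolynomial.C c) (MvPolynomial.finSuccEquiv R n f)).coeff m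
      = ∑ k ∈ Finset.range ((MvPolynomial.finSuccEquiv R n f).natDegree + 1),
          c ^ k * f.coeff (m.cons k) := by
  rw [Polynomial.eval_eq_sum_range, MvPolynomial.coeff_sum]
  refine Finset.sum_congr rfl fun k _ => ?_
  rw [mul_comm (((MvPolynomial.finSuccEquiv R n) f).coeff k), ← map_pow,
    MvPolynomial.coeff_C_mul, MvPolynomial.finSuccEquiv_coeff_coeff]

lemma initForm_coeff {n : ℕ} (f : MvPolynomial (Fin n) K) (b : Fin n → ℚ)
    (j : Fin n →₀ ℕ) :
    (initForm f b).coeff j =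
      if j ∈ f.support ∧ (wt f b j : WithTop ℚ) = trop f b then pc (f.coeff j)
      else 0 := by
  rw [initForm, MvPolynomial.coeff_sum]
  simp only [MvPolynomial.coeff_monomial]
  rw [Finset.sum_ite_eq']
  exact if_congr Finset.mem_filter rfl rfl

lemma wt_cons {n : ℕ} (f : MvPolynomial (Fin (n+1)) K) (b : Fin (n+1) → ℚ)
    (k : ℕ) (m : Fin n →₀ ℕ) :
    wt f b (m.cons k) = (f.coeff (m.cons k)).order + (k : ℚ) * b 0
      + ∑ j, (m j : ℚ) * (b ∘ Fin.succ) j := by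
  rw [wt, Fin.sum_univ_succ]
  simp [Finsupp.cons_zero, Finsupp.cons_succ, add_assoc]

/-- If `f ≠ 0` then `f̃_b ≠ 0`; moreover, if the first variable does not occur
in `f̃_b` (every index attaining the minimum has first exponent `0`), then for
any `γ₁ ∈ ℂ*`, the polynomial `g = f(γ₁ t^{b₁}, x₂,…,xₙ)` is nonzero and its
initial form at `b' = (b₂,…,bₙ)` equals `f̃_b` with the first variable formally
removed. -/
theorem initForm_ne_zero_and_remove_var (n : ℕ)
    (f : MvPolynomial (Fin (n + 1)) K) (hf : f ≠ 0) (b : Fin (n + 1) → ℚ) :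
    initForm f b ≠ 0 ∧
      ∀ γ₁ : ℂ, γ₁ ≠ 0 →
        (∀ i ∈ f.support, (wt f b i : WithTop ℚ) = trop f b → i 0 = 0) →
        substFirst f (HahnSeries.single (b 0) γ₁) ≠ 0 ∧
          initForm (substFirst f (HahnSeries.single (b 0) γ₁)) (b ∘ Fin.succ) =
            removeFirst (initForm f b) := by
  have hsupp : f.support.Nonempty := MvPolynomial.support_nonempty.2 hf
  set μ : ℚ := f.support.inf' hsupp (wt f b) with hμ
  have htrop : trop f b = (μ : WithTop ℚ) := by
    rw [trop]
    exact (Finset.coe_inf' hsupp (wt f b)).symm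
  have hcond : ∀ i, ((wt f b i : WithTop ℚ) = trop f b) ↔ wt f b i = μ := by
    intro i
    rw [htrop]
    exact_mod_cast Iff.rfl
  have hwt_ge : ∀ i ∈ f.support, μ ≤ wt f b i := fun i hi => Finset.inf'_le _ hi
  obtain ⟨i₀, hi₀s, hi₀⟩ := f.support.exists_mem_eq_inf' hsupp (wt f b)
  have hi₀μ : wt f b i₀ = μ := hi₀.symm
  constructor
  · intro h0
    have hc := initForm_coeff f b i₀
    rw [h0, MvPolynomial.coeff_zero, if_pos ⟨hi₀s, (hcond i₀).2 hi₀μ⟩] at hc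
    exact (mt HahnSeries.coeff_order_eq_zero.1 (MvPolynomial.mem_support_iff.1 hi₀s)) hc.symm
  · intro γ₁ hγ habs
    set c : K := HahnSeries.single (b 0) γ₁ with hc
    set g : MvPolynomial (Fin n) K := substFirst f c with hg
    set b' : Fin n → ℚ := b ∘ Fin.succ with hb'
    set N : ℕ := (MvPolynomial.finSuccEquiv K n f).natDegree with hN
    set S : (Fin n →₀ ℕ) → ℚ := fun m => ∑ j, (m j : ℚ) * b' j with hS
    set u : (Fin n →₀ ℕ) → ℕ → K := fun m k => c ^ k * f.coeff (m.cons k) with hu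
    have hgc : ∀ m, g.coeff m = ∑ k ∈ Finset.range (N + 1), u m k := fun m =>
      eval_C_finSuccEquiv_coeff f c m
    have hck : ∀ k : ℕ, (c ^ k) = HahnSeries.single ((k : ℚ) * b 0) (γ₁ ^ k) := by
      intro k
      rw [hc, HahnSeries.single_pow]
      congr 1
    have hu_ord : ∀ m k, f.coeff (m.cons k) ≠ 0 →
        (u m k).order = wt f b (m.cons k) - S m := by
      intro m k hk
      rw [hu]
      simp only
      rw [hck, HahnSeries.order_mul (HahnSeries.single_ne_zero (pow_ne_zero _ hγ)) hk,
        HahnSeries.order_single (pow_ne_zero _ hγ), wt_cons]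
      ring
    -- any index attaining μ has the form cons 0 m and gives good coeffs of g
    have keyA : ∀ m : Fin n →₀ ℕ, m.cons 0 ∈ f.support → wt f b (m.cons 0) = μ →
        g.coeff m ≠ 0 ∧ (g.coeff m).order = μ - S m ∧
          pc (g.coeff m) = pc (f.coeff (m.cons 0)) := by
      intro m hms hmμ
      have h0r : (0 : ℕ) ∈ Finset.range (N + 1) := Finset.mem_range.2 (Nat.succ_pos N)
      have hu0 : u m 0 = f.coeff (m.cons 0) := by rw [hu]; simp
      have hne0 : u m 0 ≠ 0 := by
        rw [hu0]; exact MvPolynomial.mem_support_iff.1 hms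
      have hord0 : (u m 0).order = μ - S m := by
        rw [hu_ord m 0 (MvPolynomial.mem_support_iff.1 hms), hmμ]
      have hoth : ∀ k ∈ Finset.range (N + 1), k ≠ 0 → ∀ p ≤ μ - S m,
          (u m k).coeff p = 0 := by
        intro k _ hk0 p hp
        by_cases hfk : f.coeff (m.cons k) = 0
        · rw [hu]; simp [hfk]
        · have hks : m.cons k ∈ f.support := MvPolynomial.mem_support_iff.2 hfk
          have hlt : μ < wt f b (m.cons k) := by
            rcases lt_or_eq_of_le (hwt_ge _ hks) with h | h
            · exact h
            · exact absurd ((Finsupp.cons_zero k m).symm.trans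
                (habs _ hks ((hcond _).2 h.symm))) hk0
          refine HahnSeries.coeff_eq_zero_of_lt_order ?_
          rw [hu_ord m k hfk]
          exact lt_of_le_of_lt hp (by linarith)
      have := sum_order_pc (Finset.range (N + 1)) (u m) 0 h0r (μ - S m) hne0 hord0 hoth
      rw [← hgc m, hu0] at this
      exact this
    -- lower bound on coefficients below μ - S m
    have keyB : ∀ m : Fin n →₀ ℕ, ∀ p < μ - S m, (g.coeff m).coeff p = 0 := by
      intro m p hp
      rw [hgc, Kcoeff_sum]
      refine Finset.sum_eq_zero fun k _ => ?_
      by_cases hfk : f.coeff (m.cons k) = 0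
      · rw [hu]; simp [hfk]
      · refine HahnSeries.coeff_eq_zero_of_lt_order ?_
        rw [hu_ord m k hfk]
        have := hwt_ge _ (MvPolynomial.mem_support_iff.2 hfk)
        exact lt_of_lt_of_le hp (by linarith)
    have hwt_g_ge : ∀ m ∈ g.support, μ ≤ wt g b' m := by
      intro m hm
      have hne : g.coeff m ≠ 0 := MvPolynomial.mem_support_iff.1 hm
      have := le_order_of _ hne (μ - S m) (keyB m)
      rw [wt]
      have : μ - S m ≤ (g.coeff m).order := this
      change μ ≤ (g.coeff m).order + S m
      linarith
    -- key C : minimizers of g come from minimizers of f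
    have keyC : ∀ m ∈ g.support, wt g b' m = μ →
        m.cons 0 ∈ f.support ∧ wt f b (m.cons 0) = μ := by
      intro m hm hmμ
      by_contra hcon
      have hne : g.coeff m ≠ 0 := MvPolynomial.mem_support_iff.1 hm
      have hall : ∀ q ≤ μ - S m, (g.coeff m).coeff q = 0 := by
        intro q hq
        rw [hgc, Kcoeff_sum]
        refine Finset.sum_eq_zero fun k _ => ?_
        by_cases hfk : f.coeff (m.cons k) = 0
        · rw [hu]; simp [hfk]
        · have hks : m.cons k ∈ f.support := MvPolynomial.mem_support_iff.2 hfk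
          have hlt : μ < wt f b (m.cons k) := by
            rcases lt_or_eq_of_le (hwt_ge _ hks) with h | h
            · exact h
            · -- then cons k m is a minimizer, so k = 0, contradicting hcon
              have hk0 : k = 0 := (Finsupp.cons_zero k m).symm.trans
                (habs _ hks ((hcond _).2 h.symm))
              exact absurd ⟨hk0 ▸ hks, hk0 ▸ h.symm⟩ hcon
          refine HahnSeries.coeff_eq_zero_of_lt_order ?_
          rw [hu_ord m k hfk]
          exact lt_of_le_of_lt hq (by linarith)
      have := lt_order_of _ hne (μ - S m) hall
      rw [wt] at hmμ
      change (g.coeff m).order + S m = μ at hmμ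
      linarith
    -- g ≠ 0
    have hi₀0 : i₀ 0 = 0 := habs i₀ hi₀s ((hcond i₀).2 hi₀μ)
    set m₀ : Fin n →₀ ℕ := Finsupp.tail i₀ with hm₀
    have hconsm₀ : m₀.cons 0 = i₀ := by
      rw [hm₀, ← hi₀0]
      exact Finsupp.cons_tail i₀
    obtain ⟨hgm₀ne, hgm₀ord, _⟩ := keyA m₀ (hconsm₀ ▸ hi₀s) (hconsm₀ ▸ hi₀μ)
    have hgne : g ≠ 0 := fun h => hgm₀ne (by rw [h, MvPolynomial.coeff_zero])
    have hm₀supp : m₀ ∈ g.support := MvPolynomial.mem_support_iff.2 hgm₀ne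
    have hwtgm₀ : wt g b' m₀ = μ := by
      rw [wt]
      change (g.coeff m₀).order + S m₀ = μ
      rw [hgm₀ord]; ring
    -- trop g b' = μ
    have htropg : trop g b' = (μ : WithTop ℚ) := by
      apply le_antisymm
      · rw [← hwtgm₀]
        exact Finset.inf_le hm₀supp
      · exact Finset.le_inf fun m hm => by exact_mod_cast hwt_g_ge m hm
    have hcondg : ∀ m, ((wt g b' m : WithTop ℚ) = trop g b') ↔ wt g b' m = μ := by
      intro m
      rw [htropg]
      exact_mod_cast Iff.rfl
    refine ⟨hgne, ?_⟩
    -- final identity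
    ext m
    rw [initForm_coeff]
    rw [removeFirst, eval_C_finSuccEquiv_coeff]
    have hRHS : ∑ k ∈ Finset.range
          ((MvPolynomial.finSuccEquiv ℂ n (initForm f b)).natDegree + 1),
          (1:ℂ) ^ k * (initForm f b).coeff (m.cons k)
        = (initForm f b).coeff (m.cons 0) := by
      rw [Finset.sum_eq_single 0]
      · rw [one_pow, one_mul]
      · intro k _ hk0
        rw [one_pow, one_mul, initForm_coeff, if_neg]
        rintro ⟨hks, hkμ⟩
        exact hk0 ((Finsupp.cons_zero k m).symm.trans (habs _ hks hkμ))
      · intro h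
        exact absurd (Finset.mem_range.2 (Nat.succ_pos _)) h
    rw [hRHS, initForm_coeff]
    by_cases h : m.cons 0 ∈ f.support ∧ wt f b (m.cons 0) = μ
    · obtain ⟨hgmne, hgmord, hgmpc⟩ := keyA m h.1 h.2
      have hwtm : wt g b' m = μ := by
        rw [wt]
        change (g.coeff m).order + S m = μ
        rw [hgmord]; ring
      rw [if_pos ⟨MvPolynomial.mem_support_iff.2 hgmne, (hcondg m).2 hwtm⟩,
        if_pos ⟨h.1, (hcond _).2 h.2⟩]
      exact hgmpc
    · rw [if_neg, if_neg]
      · rintro ⟨hms, hmμ⟩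
        exact h ⟨hms, (hcond _).1 hmμ⟩
      · rintro ⟨hms, hmμ⟩
        exact h (keyC m hms ((hcondg m).1 hmμ))
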